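/- Let G be a finite simple graph whose edge set E has t elements, let Δ be the set of triangles of G (each identified with its set of three edges), and assume |Δ| > 0. Let h be the maximum, over edges e of G, of the number of triangles of G containing e. Fix ε, δ ∈ (0,1) and p ∈ (0,1] with p ≥ (2·ε^{−2}·ln((3h+1)/δ)·(3h+1)/|Δ|)^{1/3}. Form a random subset of E by including each edge independently with probability p, and let X be the number of triangles of G all three of whose edges are included. Then Pr(|p^{−3}·X − |Δ|| < ε·|Δ|) > 1 − δ. -/

import Mathlib

open Finset
open scoped Classical

/-- The triangles of a simple graph `G`, each identified with its set of three edges. -/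
noncomputable def triEdges {V : Type*} [Fintype V] [DecidableEq V]
    (G : SimpleGraph V) [DecidableRel G.Adj] : Finset (Finset (Sym2 V)) :=
  (G.cliqueFinset 3).image (fun s => s.sym2.filter (fun e => ¬ e.IsDiag))

/-- Probability of the event `P` under independent Bernoulli(`p`) sampling of the
elements of `E`. -/
noncomputable def prBer {α : Type*} [DecidableEq α] (E : Finset α) (p : ℝ)
    (P : Finset α → Prop) : ℝ :=
  ∑ S ∈ E.powerset, if P S then p ^ S.card * (1 - p) ^ (E.card - S.card) else 0

/-- Concentration of the fixed-probability independent edge-sampling estimator: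
if each edge of `G` is kept independently with probability
`p ≥ (2·ε⁻²·ln((3h+1)/δ)·(3h+1)/|Δ|)^{1/3}`, where `h` is the maximum number of
triangles sharing a single edge and `|Δ| > 0` is the number of triangles of `G`,
then `|p⁻³·X - |Δ|| < ε·|Δ|` with probability greater than `1 - δ`, where `X` is
the number of triangles all of whose edges are kept. -/

lemma scalar_step {ι : Type*} (s : Finset ι) (h : ℕ) (hh1 : 1 ≤ h) (hk : s.card ≤ h)
    {p : ℝ} (hp0 : 0 ≤ p) (hp1 : p ≤ 1) (u : ι → ℝ) (hu : ∀ i ∈ s, 0 ≤ u i) :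
    p * ∏ i ∈ s, u i + (1 - p) ≤ ∏ i ∈ s, (p * u i ^ h + (1 - p)) ^ ((1:ℝ)/h) := by
  have hhR : (0:ℝ) < (h:ℝ) := by exact_mod_cast hh1
  have hh0 : (h:ℝ) ≠ 0 := ne_of_gt hhR
  rcases s.eq_empty_or_nonempty with rfl | hsne
  · simp
  rcases eq_or_lt_of_le hp1 with hp1' | hp1'
  · subst hp1'
    have : ∀ i ∈ s, (1 * u i ^ h + (1 - 1)) ^ ((1:ℝ)/h) = u i := by
      intro i hi
      rw [one_mul, sub_self, add_zero, ← Real.rpow_natCast (u i) h,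
        ← Real.rpow_mul (hu i hi), mul_one_div_cancel hh0, Real.rpow_one]
    rw [Finset.prod_congr rfl this]
    simp
  rcases eq_or_lt_of_le hp0 with hp0' | hp0'
  · rw [← hp0']
    simp [Real.one_rpow]
  -- main case 0 < p < 1
  have hk1 : 1 ≤ s.card := Finset.card_pos.mpr hsne
  have hkR : (0:ℝ) < (s.card : ℝ) := by exact_mod_cast hk1
  have h1p : 0 < 1 - p := by linarith
  set k := s.card with hkdef
  set σ : ℝ := (k:ℝ)/h with hσdef
  set θ : ℝ := 1 - σ with hθdef
  have hσ0 : 0 ≤ σ := by positivity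
  have hθ0 : 0 ≤ θ := by
    have h1 : (k:ℝ) ≤ (h:ℝ) := by exact_mod_cast hk
    have h2 : σ ≤ 1 := by rw [hσdef, div_le_one hhR]; exact h1
    linarith
  have hθσ : θ + σ = 1 := by rw [hθdef]; ring
  set v : ι → ℝ := fun i => p * u i ^ h + (1 - p) with hv
  have hv0 : ∀ i ∈ s, 0 < v i := by
    intro i hi
    have h3 : 0 ≤ p * u i ^ h := mul_nonneg hp0 (pow_nonneg (hu i hi) h)
    simp only [hv]; linarith
  set x : ι → ℝ := fun i => p * u i ^ h / v i with hx
  have hx0 : ∀ i ∈ s, 0 ≤ x i := by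
    intro i hi
    exact div_nonneg (mul_nonneg hp0 (pow_nonneg (hu i hi) h)) (hv0 i hi).le
  have hx1 : ∀ i ∈ s, x i ≤ 1 := by
    intro i hi
    rw [hx, div_le_one (hv0 i hi)]
    simp only [hv]; linarith
  have hxv : ∀ i ∈ s, x i * v i = p * u i ^ h := by
    intro i hi
    rw [hx]; exact div_mul_cancel₀ _ (ne_of_gt (hv0 i hi))
  have h1xv : ∀ i ∈ s, (1 - x i) * v i = 1 - p := by
    intro i hi
    have := hxv i hi
    have hvv : v i = p * u i ^ h + (1 - p) := rfl
    nlinarith [this]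
  set m : ℝ := (∑ i ∈ s, x i) / k with hm
  have hm0 : 0 ≤ m := div_nonneg (Finset.sum_nonneg hx0) hkR.le
  have hm1 : m ≤ 1 := by
    rw [hm, div_le_one hkR]
    calc ∑ i ∈ s, x i ≤ ∑ i ∈ s, (1:ℝ) := Finset.sum_le_sum hx1
      _ = k := by simp; rfl
  have key : ∀ (y : ι → ℝ), (∀ i ∈ s, 0 ≤ y i) →
      ∏ i ∈ s, y i ^ ((1:ℝ)/h) ≤ ((∑ i ∈ s, y i)/k) ^ σ := by
    intro y hy
    have amgm0 := Real.geom_mean_le_arith_mean_weighted s (fun _ => (1:ℝ)/k) y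
      (fun i _ => by positivity) (by simp [Finset.sum_const]; field_simp; rfl) hy
    have amgm : ∏ i ∈ s, y i ^ ((1:ℝ)/(k:ℝ)) ≤ ∑ i ∈ s, (1:ℝ)/(k:ℝ) * y i := amgm0
    have hsum : ∑ i ∈ s, (1:ℝ)/(k:ℝ) * y i = (∑ i ∈ s, y i)/(k:ℝ) := by
      rw [← Finset.mul_sum, one_div_mul_eq_div]
    rw [hsum] at amgm
    have hprod : ∏ i ∈ s, y i ^ ((1:ℝ)/h) = (∏ i ∈ s, y i ^ ((1:ℝ)/k)) ^ σ := by
      rw [← Real.finset_prod_rpow s _ (fun i hi => Real.rpow_nonneg (hy i hi) _) σ]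
      refine Finset.prod_congr rfl fun i hi => ?_
      rw [← Real.rpow_mul (hy i hi)]
      congr 1
      rw [hσdef]
      field_simp
    rw [hprod]
    exact Real.rpow_le_rpow
      (Finset.prod_nonneg fun i hi => Real.rpow_nonneg (hy i hi) _) amgm hσ0
  have ineqA : ∏ i ∈ s, x i ^ ((1:ℝ)/h) ≤ m ^ σ := key x hx0
  have hsum1x : (∑ i ∈ s, (1 - x i)) / (k:ℝ) = 1 - m := by
    rw [Finset.sum_sub_distrib, Finset.sum_const, ← hkdef, nsmul_eq_mul, mul_one, sub_div,
      div_self (ne_of_gt hkR), hm]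
  have ineqB : ∏ i ∈ s, (1 - x i) ^ ((1:ℝ)/h) ≤ (1-m) ^ σ := by
    have hB0 := key (fun i => 1 - x i)
      (fun i hi => by show (0:ℝ) ≤ 1 - x i; linarith [hx1 i hi])
    have hB : ∏ i ∈ s, (1 - x i) ^ ((1:ℝ)/h) ≤ ((∑ i ∈ s, (1 - x i))/(k:ℝ)) ^ σ := hB0
    rwa [hsum1x] at hB
  have upow : ∀ i ∈ s, (u i ^ h : ℝ) ^ ((1:ℝ)/h) = u i := by
    intro i hi
    rw [← Real.rpow_natCast (u i) h, ← Real.rpow_mul (hu i hi),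
      mul_one_div_cancel hh0, Real.rpow_one]
  have prodxv : (∏ i ∈ s, x i ^ ((1:ℝ)/h)) * (∏ i ∈ s, v i ^ ((1:ℝ)/h))
      = p ^ σ * ∏ i ∈ s, u i := by
    rw [← Finset.prod_mul_distrib]
    have hfac : ∀ i ∈ s, x i ^ ((1:ℝ)/h) * v i ^ ((1:ℝ)/h) = p ^ ((1:ℝ)/h) * u i := by
      intro i hi
      rw [← Real.mul_rpow (hx0 i hi) (hv0 i hi).le, hxv i hi,
        Real.mul_rpow hp0'.le (pow_nonneg (hu i hi) h), upow i hi]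
    rw [Finset.prod_congr rfl hfac, Finset.prod_mul_distrib, Finset.prod_const]
    congr 1
    rw [← Real.rpow_natCast (p ^ ((1:ℝ)/h)) s.card, ← Real.rpow_mul hp0'.le]
    congr 1
    rw [hσdef, hkdef]; ring
  have prod1xv : (∏ i ∈ s, (1 - x i) ^ ((1:ℝ)/h)) * (∏ i ∈ s, v i ^ ((1:ℝ)/h))
      = (1-p) ^ σ := by
    rw [← Finset.prod_mul_distrib]
    have hfac : ∀ i ∈ s, (1 - x i) ^ ((1:ℝ)/h) * v i ^ ((1:ℝ)/h) = (1-p) ^ ((1:ℝ)/h) := by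
      intro i hi
      rw [← Real.mul_rpow (by linarith [hx1 i hi]) (hv0 i hi).le, h1xv i hi]
    rw [Finset.prod_congr rfl hfac, Finset.prod_const]
    rw [← Real.rpow_natCast ((1-p) ^ ((1:ℝ)/h)) s.card, ← Real.rpow_mul h1p.le]
    congr 1
    rw [hσdef, hkdef]; ring
  set V := ∏ i ∈ s, v i ^ ((1:ℝ)/h) with hV
  have hV0 : 0 ≤ V := Finset.prod_nonneg fun i hi => Real.rpow_nonneg (hv0 i hi).le _
  have pxid : p * ∏ i ∈ s, u i = p ^ θ * ((∏ i ∈ s, x i ^ ((1:ℝ)/h)) * V) := by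
    rw [prodxv, ← mul_assoc, ← Real.rpow_add hp0', hθσ, Real.rpow_one]
  have p1id : (1 - p) = (1-p) ^ θ * ((∏ i ∈ s, (1 - x i) ^ ((1:ℝ)/h)) * V) := by
    rw [prod1xv, ← Real.rpow_add h1p, hθσ, Real.rpow_one]
  have young1 : p ^ θ * m ^ σ ≤ θ * p + σ * m :=
    Real.geom_mean_le_arith_mean2_weighted hθ0 hσ0 hp0'.le hm0 hθσ
  have young2 : (1-p) ^ θ * (1-m) ^ σ ≤ θ * (1-p) + σ * (1-m) :=
    Real.geom_mean_le_arith_mean2_weighted hθ0 hσ0 h1p.le (by linarith) hθσ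
  have hfin : p * ∏ i ∈ s, u i + (1 - p) ≤ V := by
    calc p * ∏ i ∈ s, u i + (1 - p)
        = p ^ θ * ((∏ i ∈ s, x i ^ ((1:ℝ)/h)) * V)
          + (1-p) ^ θ * ((∏ i ∈ s, (1 - x i) ^ ((1:ℝ)/h)) * V) := by rw [← pxid, ← p1id]
      _ ≤ p ^ θ * (m ^ σ * V) + (1-p) ^ θ * ((1-m) ^ σ * V) := by
          apply add_le_add
          · exact mul_le_mul_of_nonneg_left (mul_le_mul_of_nonneg_right ineqA hV0)
              (Real.rpow_nonneg hp0'.le _)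
          · exact mul_le_mul_of_nonneg_left (mul_le_mul_of_nonneg_right ineqB hV0)
              (Real.rpow_nonneg h1p.le _)
      _ = (p ^ θ * m ^ σ + (1-p) ^ θ * (1-m) ^ σ) * V := by ring
      _ ≤ ((θ*p + σ*m) + (θ*(1-p) + σ*(1-m))) * V :=
          mul_le_mul_of_nonneg_right (add_le_add young1 young2) hV0
      _ = (θ + σ) * V := by ring
      _ = V := by rw [hθσ, one_mul]
  exact hfin

lemma finner_aux {α ι : Type*} [DecidableEq α] (h : ℕ) (hh1 : 1 ≤ h)
    {p c : ℝ} (hp0 : 0 ≤ p) (hp1 : p ≤ 1) (hc : 0 ≤ c) (E : Finset α) :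
    ∀ (A : Finset ι) (f : ι → Finset α),
      (∀ i ∈ A, f i ⊆ E) → (∀ e ∈ E, (A.filter (fun i => e ∈ f i)).card ≤ h) →
      ∑ S ∈ E.powerset, p ^ S.card * (1 - p) ^ (E.card - S.card) *
          ∏ i ∈ A, (if f i ⊆ S then c else 1)
        ≤ ∏ i ∈ A, (1 - p ^ (f i).card + p ^ (f i).card * c ^ h) ^ ((1:ℝ)/(h:ℝ)) := by
  have hhR : (0:ℝ) < (h:ℝ) := by exact_mod_cast hh1
  have hh0 : (h:ℝ) ≠ 0 := ne_of_gt hhR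
  have hbase_nonneg : ∀ (T : Finset α), (0:ℝ) ≤ 1 - p ^ T.card + p ^ T.card * c ^ h := by
    intro T
    have h1 : p ^ T.card ≤ 1 := pow_le_one₀ hp0 hp1
    have h2 : (0:ℝ) ≤ p ^ T.card * c ^ h := by positivity
    linarith
  have hg0 : ∀ (T : Finset α), (0:ℝ) ≤ (1 - p ^ T.card + p ^ T.card * c ^ h) ^ ((1:ℝ)/(h:ℝ)) :=
    fun T => Real.rpow_nonneg (hbase_nonneg T) _
  induction E using Finset.induction_on with
  | empty =>
    intro A f hsub hdeg
    rw [Finset.powerset_empty, Finset.sum_singleton]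
    have h1 : ∀ i ∈ A, (if f i ⊆ (∅:Finset α) then c else 1) = c := by
      intro i hi; rw [if_pos (hsub i hi)]
    have h2 : ∀ i ∈ A, (1 - p ^ (f i).card + p ^ (f i).card * c ^ h) ^ ((1:ℝ)/(h:ℝ)) = c := by
      intro i hi
      have hfi : f i = ∅ := Finset.subset_empty.mp (hsub i hi)
      rw [hfi]
      simp only [Finset.card_empty, pow_zero, one_mul]
      rw [show (1:ℝ) - 1 + c ^ h = c ^ h by ring, ← Real.rpow_natCast c h,
        ← Real.rpow_mul hc, mul_one_div_cancel hh0, Real.rpow_one]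
    rw [Finset.prod_congr rfl h1, Finset.prod_congr rfl h2]
    simp
  | @insert e E' he IH =>
    intro A f hsub hdeg
    have h1p0 : (0:ℝ) ≤ 1 - p := by linarith
    rw [Finset.sum_powerset_insert he]
    have hsum1 : ∑ S ∈ E'.powerset, p ^ S.card * (1 - p) ^ ((insert e E').card - S.card) *
          ∏ i ∈ A, (if f i ⊆ S then c else 1)
        = (1-p) * ∑ S ∈ E'.powerset, p ^ S.card * (1 - p) ^ (E'.card - S.card) *
          ∏ i ∈ A.filter (fun i => e ∉ f i), (if f i ⊆ S then c else 1) := by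
      rw [Finset.mul_sum]
      refine Finset.sum_congr rfl fun S hS => ?_
      have hSE : S ⊆ E' := Finset.mem_powerset.mp hS
      have hcard : (insert e E').card - S.card = (E'.card - S.card) + 1 := by
        rw [Finset.card_insert_of_notMem he]
        have := Finset.card_le_card hSE
        omega
      have hprod : ∏ i ∈ A, (if f i ⊆ S then c else 1)
          = ∏ i ∈ A.filter (fun i => e ∉ f i), (if f i ⊆ S then c else 1) := by
        rw [Finset.prod_filter]
        refine Finset.prod_congr rfl fun i hi => ?_
        by_cases hef : e ∈ f i
        · have hnots : ¬ f i ⊆ S := fun hsubS => he (hSE (hsubS hef))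
          rw [if_neg hnots, if_neg (not_not_intro hef)]
        · rw [if_pos hef]
      rw [hcard, pow_succ, hprod]; ring
    have hsum2 : ∑ S ∈ E'.powerset, p ^ (insert e S).card *
          (1 - p) ^ ((insert e E').card - (insert e S).card) *
          ∏ i ∈ A, (if f i ⊆ insert e S then c else 1)
        = p * ∑ S ∈ E'.powerset, p ^ S.card * (1 - p) ^ (E'.card - S.card) *
          ∏ i ∈ A, (if (f i).erase e ⊆ S then c else 1) := by
      rw [Finset.mul_sum]
      refine Finset.sum_congr rfl fun S hS => ?_
      have hSE : S ⊆ E' := Finset.mem_powerset.mp hS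
      have heS : e ∉ S := fun hx => he (hSE hx)
      have hc1 : (insert e S).card = S.card + 1 := Finset.card_insert_of_notMem heS
      have hc2 : (insert e E').card - (S.card + 1) = E'.card - S.card := by
        rw [Finset.card_insert_of_notMem he]
        have := Finset.card_le_card hSE
        omega
      have hprod : ∏ i ∈ A, (if f i ⊆ insert e S then c else 1)
          = ∏ i ∈ A, (if (f i).erase e ⊆ S then c else 1) := by
        refine Finset.prod_congr rfl fun i hi => ?_
        simp only [Finset.subset_insert_iff]
      rw [hc1, hc2, hprod, pow_succ]; ring
    rw [hsum1, hsum2]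
    have IH1 := IH (A.filter (fun i => e ∉ f i)) f
      (fun i hi => by
        have hm := Finset.mem_filter.mp hi
        have h1 := hsub i hm.1
        intro x hx
        have := h1 hx
        rcases Finset.mem_insert.mp this with h2 | h2
        · exact absurd (h2 ▸ hx) hm.2
        · exact h2)
      (fun e' he' => by
        refine le_trans (Finset.card_le_card ?_) (hdeg e' (Finset.mem_insert_of_mem he'))
        intro i hi
        simp only [Finset.mem_filter] at hi ⊢
        exact ⟨hi.1.1, hi.2⟩)
    have IH2 := IH A (fun i => (f i).erase e)
      (fun i hi => Finset.subset_insert_iff.mp (hsub i hi))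
      (fun e' he' => by
        refine le_trans (Finset.card_le_card ?_) (hdeg e' (Finset.mem_insert_of_mem he'))
        intro i hi
        simp only [Finset.mem_filter] at hi ⊢
        exact ⟨hi.1, Finset.mem_of_mem_erase hi.2⟩)
    have IH2' : ∑ S ∈ E'.powerset, p ^ S.card * (1 - p) ^ (E'.card - S.card) *
          ∏ i ∈ A, (if (f i).erase e ⊆ S then c else 1)
        ≤ ∏ i ∈ A, (1 - p ^ ((f i).erase e).card + p ^ ((f i).erase e).card * c ^ h)
            ^ ((1:ℝ)/(h:ℝ)) := IH2
    refine le_trans (add_le_add (mul_le_mul_of_nonneg_left IH1 h1p0)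
      (mul_le_mul_of_nonneg_left IH2' hp0)) ?_
    have hsplit : ∏ i ∈ A, (1 - p ^ (f i).card + p ^ (f i).card * c ^ h) ^ ((1:ℝ)/(h:ℝ))
        = (∏ i ∈ A.filter (fun i => e ∈ f i),
            (1 - p ^ (f i).card + p ^ (f i).card * c ^ h) ^ ((1:ℝ)/(h:ℝ))) *
          ∏ i ∈ A.filter (fun i => ¬ e ∈ f i),
            (1 - p ^ (f i).card + p ^ (f i).card * c ^ h) ^ ((1:ℝ)/(h:ℝ)) :=
      (Finset.prod_filter_mul_prod_filter_not A _ _).symm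
    have hsplit2 : ∏ i ∈ A, (1 - p ^ ((f i).erase e).card + p ^ ((f i).erase e).card * c ^ h)
            ^ ((1:ℝ)/(h:ℝ))
        = (∏ i ∈ A.filter (fun i => e ∈ f i),
            (1 - p ^ ((f i).erase e).card + p ^ ((f i).erase e).card * c ^ h) ^ ((1:ℝ)/(h:ℝ))) *
          ∏ i ∈ A.filter (fun i => ¬ e ∈ f i),
            (1 - p ^ (f i).card + p ^ (f i).card * c ^ h) ^ ((1:ℝ)/(h:ℝ)) := by
      rw [← Finset.prod_filter_mul_prod_filter_not A (fun i => e ∈ f i)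
        (fun i => (1 - p ^ ((f i).erase e).card + p ^ ((f i).erase e).card * c ^ h)
          ^ ((1:ℝ)/(h:ℝ)))]
      congr 1
      refine Finset.prod_congr rfl fun i hi => ?_
      rw [Finset.erase_eq_of_notMem (Finset.mem_filter.mp hi).2]
    rw [hsplit, hsplit2]
    have hP'0 : (0:ℝ) ≤ ∏ i ∈ A.filter (fun i => ¬ e ∈ f i),
        (1 - p ^ (f i).card + p ^ (f i).card * c ^ h) ^ ((1:ℝ)/(h:ℝ)) :=
      Finset.prod_nonneg fun i _ => hg0 _
    have hkle : (A.filter (fun i => e ∈ f i)).card ≤ h := hdeg e (Finset.mem_insert_self e E')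
    have hscalar := scalar_step (A.filter (fun i => e ∈ f i)) h hh1 hkle hp0 hp1
      (fun i => (1 - p ^ ((f i).erase e).card + p ^ ((f i).erase e).card * c ^ h)
        ^ ((1:ℝ)/(h:ℝ)))
      (fun i _ => hg0 _)
    have hgid : ∀ i ∈ A.filter (fun i => e ∈ f i),
        (p * ((1 - p ^ ((f i).erase e).card + p ^ ((f i).erase e).card * c ^ h)
            ^ ((1:ℝ)/(h:ℝ))) ^ h + (1 - p)) ^ ((1:ℝ)/(h:ℝ))
        = (1 - p ^ (f i).card + p ^ (f i).card * c ^ h) ^ ((1:ℝ)/(h:ℝ)) := by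
      intro i hi
      have hei : e ∈ f i := (Finset.mem_filter.mp hi).2
      have hcard : (f i).card = ((f i).erase e).card + 1 := by
        rw [Finset.card_erase_of_mem hei]
        have h1 : 1 ≤ (f i).card := Finset.card_pos.mpr ⟨e, hei⟩
        omega
      have hround : ((1 - p ^ ((f i).erase e).card + p ^ ((f i).erase e).card * c ^ h)
            ^ ((1:ℝ)/(h:ℝ))) ^ h
          = 1 - p ^ ((f i).erase e).card + p ^ ((f i).erase e).card * c ^ h := by
        rw [← Real.rpow_natCast ((1 - p ^ ((f i).erase e).card
            + p ^ ((f i).erase e).card * c ^ h) ^ ((1:ℝ)/(h:ℝ))) h,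
          ← Real.rpow_mul (hbase_nonneg _), one_div_mul_cancel hh0, Real.rpow_one]
      rw [hround]
      congr 1
      rw [hcard, pow_succ]
      ring
    have hscalar2 : p * (∏ i ∈ A.filter (fun i => e ∈ f i),
          (1 - p ^ ((f i).erase e).card + p ^ ((f i).erase e).card * c ^ h)
            ^ ((1:ℝ)/(h:ℝ))) + (1 - p)
        ≤ ∏ i ∈ A.filter (fun i => e ∈ f i),
            (1 - p ^ (f i).card + p ^ (f i).card * c ^ h) ^ ((1:ℝ)/(h:ℝ)) := by
      refine le_trans hscalar (le_of_eq ?_)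
      exact Finset.prod_congr rfl hgid
    calc (1-p) * (∏ i ∈ A.filter (fun i => ¬ e ∈ f i),
            (1 - p ^ (f i).card + p ^ (f i).card * c ^ h) ^ ((1:ℝ)/(h:ℝ)))
          + p * ((∏ i ∈ A.filter (fun i => e ∈ f i),
            (1 - p ^ ((f i).erase e).card + p ^ ((f i).erase e).card * c ^ h)
              ^ ((1:ℝ)/(h:ℝ))) *
            ∏ i ∈ A.filter (fun i => ¬ e ∈ f i),
            (1 - p ^ (f i).card + p ^ (f i).card * c ^ h) ^ ((1:ℝ)/(h:ℝ)))
        = (p * (∏ i ∈ A.filter (fun i => e ∈ f i),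
            (1 - p ^ ((f i).erase e).card + p ^ ((f i).erase e).card * c ^ h)
              ^ ((1:ℝ)/(h:ℝ))) + (1 - p)) *
          ∏ i ∈ A.filter (fun i => ¬ e ∈ f i),
            (1 - p ^ (f i).card + p ^ (f i).card * c ^ h) ^ ((1:ℝ)/(h:ℝ)) := by ring
      _ ≤ (∏ i ∈ A.filter (fun i => e ∈ f i),
            (1 - p ^ (f i).card + p ^ (f i).card * c ^ h) ^ ((1:ℝ)/(h:ℝ))) *
          ∏ i ∈ A.filter (fun i => ¬ e ∈ f i),
            (1 - p ^ (f i).card + p ^ (f i).card * c ^ h) ^ ((1:ℝ)/(h:ℝ)) :=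
          mul_le_mul_of_nonneg_right hscalar2 hP'0


lemma wsum_one {α : Type*} [DecidableEq α] (p : ℝ) (E : Finset α) :
    ∑ S ∈ E.powerset, p ^ S.card * (1 - p) ^ (E.card - S.card) = 1 := by
  induction E using Finset.induction_on with
  | empty => simp
  | @insert e E' he IH =>
    rw [Finset.sum_powerset_insert he]
    have h1 : ∑ S ∈ E'.powerset, p ^ S.card * (1-p) ^ ((insert e E').card - S.card)
        = (1-p) * ∑ S ∈ E'.powerset, p ^ S.card * (1-p) ^ (E'.card - S.card) := by
      rw [Finset.mul_sum]
      refine Finset.sum_congr rfl fun S hS => ?_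
      have hSE := Finset.mem_powerset.mp hS
      have hcc : (insert e E').card - S.card = (E'.card - S.card) + 1 := by
        rw [Finset.card_insert_of_notMem he]
        have := Finset.card_le_card hSE
        omega
      rw [hcc, pow_succ]; ring
    have h2 : ∑ S ∈ E'.powerset, p ^ (insert e S).card *
          (1-p) ^ ((insert e E').card - (insert e S).card)
        = p * ∑ S ∈ E'.powerset, p ^ S.card * (1-p) ^ (E'.card - S.card) := by
      rw [Finset.mul_sum]
      refine Finset.sum_congr rfl fun S hS => ?_
      have hSE := Finset.mem_powerset.mp hS
      have heS : e ∉ S := fun hx => he (hSE hx)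
      have hc1 : (insert e S).card = S.card + 1 := Finset.card_insert_of_notMem heS
      have hc2 : (insert e E').card - (S.card + 1) = E'.card - S.card := by
        rw [Finset.card_insert_of_notMem he]
        have := Finset.card_le_card hSE
        omega
      rw [hc1, hc2, pow_succ]; ring
    rw [h1, h2, IH]
    ring

lemma log_ge_two_thirds {t : ℝ} (h0 : 0 ≤ t) (h1 : t ≤ 1) : 2*t/3 ≤ Real.log (1+t) := by
  have h1t : (0:ℝ) < 1 + t := by linarith
  rw [Real.le_log_iff_exp_le h1t]
  have hx0 : 0 ≤ 2*t/3 := by linarith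
  have hx1 : 2*t/3 ≤ 1 := by linarith
  have hb := Real.exp_bound' hx0 hx1 (n := 4) (by norm_num)
  have hsum : ∑ m ∈ Finset.range 4, (2*t/3) ^ m / (m.factorial : ℝ)
      = 1 + 2*t/3 + (2*t/3)^2/2 + (2*t/3)^3/6 := by
    rw [Finset.sum_range_succ, Finset.sum_range_succ, Finset.sum_range_succ,
      Finset.sum_range_succ, Finset.sum_range_zero]
    norm_num [Nat.factorial]
  rw [hsum] at hb
  norm_num [Nat.factorial] at hb
  have ht2 : t^2 ≤ t := by nlinarith
  have ht3 : t^3 ≤ t := by nlinarith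
  have ht4 : t^4 ≤ t := by nlinarith
  nlinarith [hb]

lemma phi_lower {x : ℝ} (h0 : 0 ≤ x) (h1 : x ≤ 1) :
    x^2/3 ≤ (1+x) * Real.log (1+x) - x := by
  have hd : ∀ t ∈ Set.Ioo (0:ℝ) 1,
      HasDerivAt (fun t : ℝ => (1+t) * Real.log (1+t) - t - t^2/3)
        (Real.log (1+t) - 2*t/3) t := by
    intro t ht
    have h1t : (1:ℝ) + t ≠ 0 := by nlinarith [ht.1]
    have d1 : HasDerivAt (fun t : ℝ => 1 + t) 1 t := by
      simpa using (hasDerivAt_id t).const_add (1:ℝ)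
    have d2 : HasDerivAt (fun t : ℝ => Real.log (1+t)) (1/(1+t)) t := by
      have := (Real.hasDerivAt_log h1t).comp t d1
      exact this.congr_deriv (by simp)
    have d3 : HasDerivAt (fun t : ℝ => (1+t) * Real.log (1+t))
        (1 * Real.log (1+t) + (1+t) * (1/(1+t))) t := d1.mul d2
    have d4 : HasDerivAt (fun t : ℝ => t^2) (2*t) t := by
      simpa using hasDerivAt_pow 2 t
    have d5 := (d3.sub (hasDerivAt_id t)).sub (d4.div_const 3)
    exact d5.congr_deriv (by rw [mul_one_div_cancel h1t]; ring)
  have hmono : MonotoneOn (fun t : ℝ => (1+t) * Real.log (1+t) - t - t^2/3)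
      (Set.Icc 0 1) := by
    apply monotoneOn_of_deriv_nonneg (convex_Icc 0 1)
    · have hc : ContinuousOn (fun t : ℝ => (1:ℝ)+t) (Set.Icc (0:ℝ) 1) := by fun_prop
      refine (ContinuousOn.sub (ContinuousOn.sub (hc.mul (hc.log ?_)) ?_) ?_)
      · intro t ht
        have h2 := ht.1
        exact ne_of_gt (by nlinarith)
      · fun_prop
      · fun_prop
    · intro t ht
      rw [interior_Icc] at ht
      exact ((hd t ht).differentiableAt).differentiableWithinAt
    · intro t ht
      rw [interior_Icc] at ht
      rw [(hd t ht).deriv]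
      have := log_ge_two_thirds ht.1.le ht.2.le
      linarith
  rcases eq_or_lt_of_le h0 with rfl | hx0
  · simp
  have h2 := hmono (Set.mem_Icc.mpr ⟨le_refl 0, zero_le_one⟩)
    (Set.mem_Icc.mpr ⟨h0, h1⟩) h0
  norm_num [Real.log_one] at h2
  linarith

lemma psi_lower {x : ℝ} (h0 : 0 ≤ x) (h1 : x < 1) :
    x^2/2 ≤ (1-x) * Real.log (1-x) + x := by
  rcases eq_or_lt_of_le h0 with rfl | hx0
  · simp
  have hd : ∀ t ∈ Set.Ioo (0:ℝ) x,
      HasDerivAt (fun t : ℝ => (1-t) * Real.log (1-t) + t - t^2/2)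
        (-Real.log (1-t) - t) t := by
    intro t ht
    have h1t : (1:ℝ) - t ≠ 0 := by
      have := ht.2
      have : t < 1 := lt_trans this h1
      linarith
    have d1 : HasDerivAt (fun t : ℝ => 1 - t) (-1) t := by
      simpa using (hasDerivAt_id t).const_sub (1:ℝ)
    have d2 : HasDerivAt (fun t : ℝ => Real.log (1-t)) (1/(1-t) * (-1)) t := by
      have := (Real.hasDerivAt_log h1t).comp t d1
      exact this.congr_deriv (by simp)
    have d3 : HasDerivAt (fun t : ℝ => (1-t) * Real.log (1-t))
        ((-1) * Real.log (1-t) + (1-t) * (1/(1-t) * (-1))) t := d1.mul d2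
    have d4 : HasDerivAt (fun t : ℝ => t^2) (2*t) t := by
      simpa using hasDerivAt_pow 2 t
    have d5 := (d3.add (hasDerivAt_id t)).sub (d4.div_const 2)
    exact d5.congr_deriv (by rw [← mul_assoc, mul_one_div_cancel h1t]; ring)
  have hmono : MonotoneOn (fun t : ℝ => (1-t) * Real.log (1-t) + t - t^2/2)
      (Set.Icc 0 x) := by
    apply monotoneOn_of_deriv_nonneg (convex_Icc 0 x)
    · have hc : ContinuousOn (fun t : ℝ => (1:ℝ)-t) (Set.Icc (0:ℝ) x) := by fun_prop
      refine (ContinuousOn.sub (ContinuousOn.add (hc.mul (hc.log ?_)) ?_) ?_)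
      · intro t ht
        have h2 := ht.2
        have h3 : t < 1 := lt_of_le_of_lt h2 h1
        exact ne_of_gt (by linarith)
      · fun_prop
      · fun_prop
    · intro t ht
      rw [interior_Icc] at ht
      exact ((hd t ht).differentiableAt).differentiableWithinAt
    · intro t ht
      rw [interior_Icc] at ht
      rw [(hd t ht).deriv]
      have hpos : (0:ℝ) < 1 - t := by
        have : t < 1 := lt_trans ht.2 h1
        linarith
      have := Real.log_le_sub_one_of_pos hpos
      linarith
  have h2 := hmono (Set.mem_Icc.mpr ⟨le_refl 0, h0⟩)
    (Set.mem_Icc.mpr ⟨h0, le_refl x⟩) h0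
  norm_num [Real.log_one] at h2
  linarith

lemma triEdges_subset {V : Type*} [Fintype V] [DecidableEq V] (G : SimpleGraph V)
    [DecidableRel G.Adj] : ∀ T ∈ triEdges G, T ⊆ G.edgeFinset := by
  intro T hT
  rw [triEdges, Finset.mem_image] at hT
  obtain ⟨s, hs, rfl⟩ := hT
  rw [SimpleGraph.mem_cliqueFinset_iff] at hs
  intro e he
  rw [Finset.mem_filter] at he
  obtain ⟨hesym, hnd⟩ := he
  induction e using Sym2.ind with
  | _ a b =>
    rw [Finset.mk_mem_sym2_iff] at hesym
    have hab : a ≠ b := by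
      intro hab
      exact hnd (by rw [Sym2.mk_isDiag_iff]; exact hab)
    have hadj : G.Adj a b := hs.1 (Finset.mem_coe.mpr hesym.1) (Finset.mem_coe.mpr hesym.2) hab
    rw [SimpleGraph.mem_edgeFinset, SimpleGraph.mem_edgeSet]
    exact hadj

lemma triEdges_card3 {V : Type*} [Fintype V] [DecidableEq V] (G : SimpleGraph V)
    [DecidableRel G.Adj] : ∀ T ∈ triEdges G, T.card = 3 := by
  intro T hT
  rw [triEdges, Finset.mem_image] at hT
  obtain ⟨s, hs, rfl⟩ := hT
  rw [SimpleGraph.mem_cliqueFinset_iff] at hs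
  obtain ⟨a, b, c, hab, hac, hbc, rfl⟩ := Finset.card_eq_three.mp hs.2
  have hset : ({a,b,c} : Finset V).sym2.filter (fun e => ¬ e.IsDiag)
      = {s(a,b), s(a,c), s(b,c)} := by
    ext e
    induction e using Sym2.ind with
    | _ x y =>
      simp only [Finset.mem_filter, Finset.mk_mem_sym2_iff, Finset.mem_insert,
        Finset.mem_singleton, Sym2.mk_isDiag_iff, Sym2.eq_iff]
      constructor
      · rintro ⟨⟨hx, hy⟩, hxy⟩
        rcases hx with rfl|rfl|rfl <;> rcases hy with rfl|rfl|rfl <;> tauto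
      · rintro (⟨⟨rfl, rfl⟩|⟨rfl, rfl⟩⟩|⟨⟨rfl, rfl⟩|⟨rfl, rfl⟩⟩|⟨rfl, rfl⟩|⟨rfl, rfl⟩) <;>
          simp_all <;> tauto
  rw [hset]
  rw [Finset.card_insert_of_notMem, Finset.card_insert_of_notMem, Finset.card_singleton]
  · simp only [Finset.mem_singleton, Sym2.eq_iff]
    tauto
  · simp only [Finset.mem_insert, Finset.mem_singleton, Sym2.eq_iff]
    tauto

lemma chernoff_up_exp {h D q L M ε : ℝ} (hε0 : 0 < ε) (hε1 : ε < 1)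
    (hq0 : 0 < q) (hq1 : q ≤ 1) (hD : 0 < D) (hh : 0 < h) (hL : 0 ≤ L)
    (hM : 3*h ≤ M) (hqD : 2*L*M ≤ q*D*ε^2) :
    -((1+ε)*(q*D)) * ((1:ℝ)/h) * Real.log (1+ε) + D/h * Real.log (1 + q*ε) ≤ -(2*L) := by
  have hqe : (0:ℝ) ≤ q*ε := mul_nonneg hq0.le hε0.le
  have hlog1 : Real.log (1 + q*ε) ≤ q*ε := by
    have := Real.log_le_sub_one_of_pos (show (0:ℝ) < 1 + q*ε by linarith)
    linarith
  have hphi : ε^2/3 ≤ (1+ε) * Real.log (1+ε) - ε := phi_lower hε0.le hε1.le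
  have h6 : (0:ℝ) ≤ q*D := mul_nonneg hq0.le hD.le
  have key : -((1+ε)*(q*D)) * Real.log (1+ε) + D * Real.log (1 + q*ε) ≤ -(2*L)*h := by
    have t1 : D * Real.log (1 + q*ε) ≤ D*(q*ε) := mul_le_mul_of_nonneg_left hlog1 hD.le
    have t2 : q*D*(ε + ε^2/3) ≤ (1+ε)*(q*D) * Real.log (1+ε) := by
      nlinarith [mul_le_mul_of_nonneg_left hphi h6]
    have t3 : 2*L*h ≤ q*D*ε^2/3 := by
      nlinarith [hqD, mul_nonneg hL (by linarith : (0:ℝ) ≤ M - 3*h)]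
    linarith
  have hhinv : (0:ℝ) < h⁻¹ := by positivity
  calc -((1+ε)*(q*D)) * ((1:ℝ)/h) * Real.log (1+ε) + D/h * Real.log (1 + q*ε)
      = (-((1+ε)*(q*D)) * Real.log (1+ε) + D * Real.log (1 + q*ε)) * h⁻¹ := by
        field_simp
    _ ≤ (-(2*L)*h) * h⁻¹ := mul_le_mul_of_nonneg_right key hhinv.le
    _ = -(2*L) := by field_simp

lemma chernoff_lo_exp {h D q L M ε : ℝ} (hε0 : 0 < ε) (hε1 : ε < 1)
    (hq0 : 0 < q) (hq1 : q ≤ 1) (hD : 0 < D) (hh : 0 < h) (hL : 0 ≤ L)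
    (hM : 3*h ≤ M) (hqD : 2*L*M ≤ q*D*ε^2) :
    -((1-ε)*(q*D)) * ((1:ℝ)/h) * Real.log (1-ε) + D/h * Real.log (1 - q*ε) ≤ -(3*L) := by
  have h1q : (0:ℝ) ≤ ε * (1 - q) := mul_nonneg hε0.le (by linarith)
  have hbase : (0:ℝ) < 1 - q*ε := by nlinarith
  have hlog1 : Real.log (1 - q*ε) ≤ -(q*ε) := by
    have := Real.log_le_sub_one_of_pos hbase
    linarith
  have hpsi : ε^2/2 ≤ (1-ε) * Real.log (1-ε) + ε := psi_lower hε0.le hε1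
  have h6 : (0:ℝ) ≤ q*D := mul_nonneg hq0.le hD.le
  have key : -((1-ε)*(q*D)) * Real.log (1-ε) + D * Real.log (1 - q*ε) ≤ -(3*L)*h := by
    have t1 : D * Real.log (1 - q*ε) ≤ D*(-(q*ε)) := mul_le_mul_of_nonneg_left hlog1 hD.le
    have t2 : -((1-ε)*(q*D)) * Real.log (1-ε) ≤ q*D*(ε - ε^2/2) := by
      nlinarith [mul_le_mul_of_nonneg_left hpsi h6]
    have t3 : 3*L*h ≤ q*D*ε^2/2 := by
      nlinarith [hqD, mul_nonneg hL (by linarith : (0:ℝ) ≤ M - 3*h)]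
    linarith
  have hhinv : (0:ℝ) < h⁻¹ := by positivity
  calc -((1-ε)*(q*D)) * ((1:ℝ)/h) * Real.log (1-ε) + D/h * Real.log (1 - q*ε)
      = (-((1-ε)*(q*D)) * Real.log (1-ε) + D * Real.log (1 - q*ε)) * h⁻¹ := by
        field_simp
    _ ≤ (-(3*L)*h) * h⁻¹ := mul_le_mul_of_nonneg_right key hhinv.le
    _ = -(3*L) := by field_simp


set_option maxHeartbeats 1000000 in
theorem stmt4 {V : Type*} [Fintype V] [DecidableEq V]
    (G : SimpleGraph V) [DecidableRel G.Adj] (t h : ℕ) (ε δ p : ℝ)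
    (ht : G.edgeFinset.card = t)
    (hΔpos : 0 < (triEdges G).card)
    (hh : h = G.edgeFinset.sup (fun e => ((triEdges G).filter (fun T => e ∈ T)).card))
    (hε : ε ∈ Set.Ioo (0 : ℝ) 1) (hδ : δ ∈ Set.Ioo (0 : ℝ) 1)
    (hp0 : 0 < p) (hp1 : p ≤ 1)
    (hplb : (2 * ε⁻¹ ^ 2 * Real.log ((3 * (h : ℝ) + 1) / δ) *
        ((3 * (h : ℝ) + 1) / ((triEdges G).card : ℝ))) ^ ((1 : ℝ) / 3) ≤ p) :
    1 - δ < prBer G.edgeFinset p (fun S =>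
      |(p ^ 3)⁻¹ * (((triEdges G).filter (fun T => T ⊆ S)).card : ℝ) -
        ((triEdges G).card : ℝ)| < ε * ((triEdges G).card : ℝ)) := by
  obtain ⟨hε0, hε1⟩ := hε
  obtain ⟨hδ0, hδ1⟩ := hδ
  set E := G.edgeFinset with hE
  set Δ := triEdges G with hΔdef
  set D := Δ.card with hD
  have hDR : (0:ℝ) < (D:ℝ) := by exact_mod_cast hΔpos
  have hsub := triEdges_subset G
  have hcard3 := triEdges_card3 G
  have hdeg : ∀ e ∈ E, (Δ.filter (fun T => e ∈ T)).card ≤ h := by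
    intro e he
    rw [hh]
    exact Finset.le_sup (f := fun e => (Δ.filter (fun T => e ∈ T)).card) he
  have hh1 : 1 ≤ h := by
    obtain ⟨T, hT⟩ := Finset.card_pos.mp hΔpos
    have h3 : 0 < T.card := by rw [hcard3 T hT]; norm_num
    obtain ⟨e, heT⟩ := Finset.card_pos.mp h3
    have heE : e ∈ E := hsub T hT heT
    have h4 : 0 < (Δ.filter (fun T => e ∈ T)).card :=
      Finset.card_pos.mpr ⟨T, Finset.mem_filter.mpr ⟨hT, heT⟩⟩
    exact le_trans h4 (hdeg e heE)
  have hhR : (0:ℝ) < (h:ℝ) := by exact_mod_cast hh1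
  set q := p^3 with hq
  have hq0 : 0 < q := by positivity
  have hq1 : q ≤ 1 := by
    rw [hq]
    exact pow_le_one₀ hp0.le hp1
  set M := 3*(h:ℝ)+1 with hM
  have hM4 : (4:ℝ) ≤ M := by
    have h5 : (1:ℝ) ≤ (h:ℝ) := by exact_mod_cast hh1
    rw [hM]; linarith
  have hM3h : 3*(h:ℝ) ≤ M := by rw [hM]; linarith
  have hM0 : (0:ℝ) < M := by linarith
  have hMδ : (0:ℝ) < M/δ := div_pos hM0 hδ0
  set L := Real.log (M/δ) with hL
  have hL0 : 0 ≤ L := Real.log_nonneg (by rw [le_div_iff₀ hδ0]; nlinarith)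
  -- cube the lower bound on p
  have hεne : ε ≠ 0 := ne_of_gt hε0
  have hz0 : (0:ℝ) ≤ 2 * ε⁻¹^2 * L * (M / (D:ℝ)) := by
    have hMD : (0:ℝ) ≤ M / (D:ℝ) := div_nonneg hM0.le hDR.le
    have h2e : (0:ℝ) ≤ 2 * ε⁻¹^2 := by positivity
    exact mul_nonneg (mul_nonneg h2e hL0) hMD
  have hqD : 2 * ε⁻¹^2 * L * M ≤ q * (D:ℝ) := by
    have hround : ((2 * ε⁻¹^2 * L * (M / (D:ℝ))) ^ ((1:ℝ)/3)) ^ (3:ℕ)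
        = 2 * ε⁻¹^2 * L * (M / (D:ℝ)) := by
      rw [← Real.rpow_natCast ((2 * ε⁻¹^2 * L * (M / (D:ℝ))) ^ ((1:ℝ)/3)) 3,
        ← Real.rpow_mul hz0]
      norm_num
    have h3 : 2 * ε⁻¹^2 * L * (M / (D:ℝ)) ≤ q := by
      rw [hq]
      calc 2 * ε⁻¹^2 * L * (M / (D:ℝ))
          = ((2 * ε⁻¹^2 * L * (M / (D:ℝ))) ^ ((1:ℝ)/3)) ^ (3:ℕ) := hround.symm
        _ ≤ p ^ 3 := pow_le_pow_left₀ (Real.rpow_nonneg hz0 _) hplb 3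
    have h4 := mul_le_mul_of_nonneg_right h3 hDR.le
    calc 2 * ε⁻¹^2 * L * M = 2 * ε⁻¹^2 * L * (M / (D:ℝ)) * (D:ℝ) := by
          rw [mul_assoc (2 * ε⁻¹^2 * L) (M / (D:ℝ)) (D:ℝ),
            div_mul_cancel₀ M (ne_of_gt hDR)]
      _ ≤ q * (D:ℝ) := h4
  have hε2 : 2*L*M ≤ q*(D:ℝ)*ε^2 := by
    have hmul := mul_le_mul_of_nonneg_right hqD (sq_nonneg ε)
    have hid : 2*ε⁻¹^2*L*M*ε^2 = 2*L*M := by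
      field_simp
    rw [hid] at hmul
    exact hmul
  have hwnn : ∀ S : Finset (Sym2 V), (0:ℝ) ≤ p ^ S.card * (1-p) ^ (E.card - S.card) := by
    intro S
    have h1p : (0:ℝ) ≤ 1 - p := by linarith
    positivity
  -- the moment generating function bound
  have mgf : ∀ y : ℝ, 0 ≤ y →
      ∑ S ∈ E.powerset, p ^ S.card * (1-p) ^ (E.card - S.card) *
        (y ^ ((1:ℝ)/(h:ℝ))) ^ ((Δ.filter (fun T => T ⊆ S)).card)
      ≤ (1 - q + q*y) ^ ((D:ℝ)/(h:ℝ)) := by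
    intro y hy
    have hc0 : 0 ≤ y ^ ((1:ℝ)/(h:ℝ)) := Real.rpow_nonneg hy _
    have hch : (y ^ ((1:ℝ)/(h:ℝ))) ^ h = y := by
      rw [← Real.rpow_natCast (y ^ ((1:ℝ)/(h:ℝ))) h, ← Real.rpow_mul hy,
        one_div_mul_cancel (ne_of_gt hhR), Real.rpow_one]
    have hfin := finner_aux h hh1 hp0.le hp1 hc0 E Δ id
      (fun T hT => hsub T hT) (fun e he => hdeg e he)
    have hfin' : ∑ S ∈ E.powerset, p ^ S.card * (1-p) ^ (E.card - S.card) *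
          ∏ T ∈ Δ, (if T ⊆ S then (y ^ ((1:ℝ)/(h:ℝ))) else 1)
        ≤ ∏ T ∈ Δ, (1 - p ^ T.card + p ^ T.card * (y ^ ((1:ℝ)/(h:ℝ))) ^ h)
            ^ ((1:ℝ)/(h:ℝ)) := hfin
    have hLrw : ∀ S ∈ E.powerset,
        p ^ S.card * (1-p) ^ (E.card - S.card) *
          ∏ T ∈ Δ, (if T ⊆ S then (y ^ ((1:ℝ)/(h:ℝ))) else 1)
        = p ^ S.card * (1-p) ^ (E.card - S.card) *
          (y ^ ((1:ℝ)/(h:ℝ))) ^ ((Δ.filter (fun T => T ⊆ S)).card) := by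
      intro S _
      congr 1
      rw [Finset.prod_ite, Finset.prod_const, Finset.prod_const, one_pow, mul_one]
    rw [Finset.sum_congr rfl hLrw] at hfin'
    have hqy : (0:ℝ) ≤ q*y := mul_nonneg hq0.le hy
    have hbase0 : (0:ℝ) ≤ 1 - q + q*y := by linarith only [hq1, hqy]
    have hRrw : ∏ T ∈ Δ, (1 - p ^ T.card + p ^ T.card * (y ^ ((1:ℝ)/(h:ℝ))) ^ h)
          ^ ((1:ℝ)/(h:ℝ))
        = (1 - q + q*y) ^ ((D:ℝ)/(h:ℝ)) := by
      have hfac : ∀ T ∈ Δ, (1 - p ^ T.card + p ^ T.card * (y ^ ((1:ℝ)/(h:ℝ))) ^ h)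
            ^ ((1:ℝ)/(h:ℝ))
          = (1 - q + q*y) ^ ((1:ℝ)/(h:ℝ)) := by
        intro T hT
        rw [hcard3 T hT, hch, hq]
      rw [Finset.prod_congr rfl hfac, Finset.prod_const, ← hD,
        ← Real.rpow_natCast ((1 - q + q*y) ^ ((1:ℝ)/(h:ℝ))) D,
        ← Real.rpow_mul hbase0]
      congr 1
      ring
    rw [hRrw] at hfin'
    exact hfin'
  -- upper tail
  have markov_up : prBer E p (fun S =>
        (1+ε)*(q*(D:ℝ)) ≤ ((Δ.filter (fun T => T ⊆ S)).card : ℝ))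
      ≤ Real.exp (-(2*L)) := by
    have hy1 : (0:ℝ) < 1 + ε := by linarith
    set c := (1+ε) ^ ((1:ℝ)/(h:ℝ)) with hcdef
    have hc0 : 0 < c := Real.rpow_pos_of_pos hy1 _
    have hc1 : 1 ≤ c := Real.one_le_rpow (by linarith) (by positivity)
    set a := (1+ε)*(q*(D:ℝ)) with ha
    have step1 : prBer E p (fun S =>
          (1+ε)*(q*(D:ℝ)) ≤ ((Δ.filter (fun T => T ⊆ S)).card : ℝ))
        ≤ c ^ (-a) * ∑ S ∈ E.powerset, p ^ S.card * (1-p) ^ (E.card - S.card) *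
            c ^ ((Δ.filter (fun T => T ⊆ S)).card) := by
      simp only [prBer]
      rw [Finset.mul_sum]
      refine Finset.sum_le_sum fun S hS => ?_
      by_cases hP : (1+ε)*(q*(D:ℝ)) ≤ ((Δ.filter (fun T => T ⊆ S)).card : ℝ)
      · rw [if_pos hP]
        have h2 : (1:ℝ) ≤ c ^ ((((Δ.filter (fun T => T ⊆ S)).card : ℝ)) - a) := by
          calc (1:ℝ) = c ^ (0:ℝ) := (Real.rpow_zero c).symm
            _ ≤ c ^ ((((Δ.filter (fun T => T ⊆ S)).card : ℝ)) - a) :=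
              Real.rpow_le_rpow_of_exponent_le hc1 (by rw [ha]; linarith only [hP])
        have hsplitc : c ^ ((((Δ.filter (fun T => T ⊆ S)).card : ℝ)) - a)
            = c ^ ((Δ.filter (fun T => T ⊆ S)).card) * c ^ (-a) := by
          rw [sub_eq_add_neg, Real.rpow_add hc0, Real.rpow_natCast]
        have h5 := mul_le_mul_of_nonneg_left h2 (hwnn S)
        rw [mul_one, hsplitc] at h5
        calc p ^ S.card * (1-p) ^ (E.card - S.card)
            ≤ p ^ S.card * (1-p) ^ (E.card - S.card) *
              (c ^ ((Δ.filter (fun T => T ⊆ S)).card) * c ^ (-a)) := h5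
          _ = c ^ (-a) * (p ^ S.card * (1-p) ^ (E.card - S.card) *
              c ^ ((Δ.filter (fun T => T ⊆ S)).card)) := by ring
      · rw [if_neg hP]
        exact mul_nonneg (Real.rpow_nonneg hc0.le _)
          (mul_nonneg (hwnn S) (pow_nonneg hc0.le _))
    have step2 : c ^ (-a) * ∑ S ∈ E.powerset, p ^ S.card * (1-p) ^ (E.card - S.card) *
            c ^ ((Δ.filter (fun T => T ⊆ S)).card)
        ≤ c ^ (-a) * (1 - q + q*(1+ε)) ^ ((D:ℝ)/(h:ℝ)) :=
      mul_le_mul_of_nonneg_left (mgf (1+ε) hy1.le) (Real.rpow_nonneg hc0.le _)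
    have hqe : (0:ℝ) ≤ q*ε := mul_nonneg hq0.le hε0.le
    have step3 : c ^ (-a) * (1 - q + q*(1+ε)) ^ ((D:ℝ)/(h:ℝ)) ≤ Real.exp (-(2*L)) := by
      have hbeq : 1 - q + q*(1+ε) = 1 + q*ε := by ring
      have e1 : c ^ (-a) = Real.exp (-a * ((1:ℝ)/(h:ℝ)) * Real.log (1+ε)) := by
        rw [hcdef, ← Real.rpow_mul hy1.le, Real.rpow_def_of_pos hy1]
        congr 1
        ring
      have e2 : (1 - q + q*(1+ε)) ^ ((D:ℝ)/(h:ℝ))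
          = Real.exp ((D:ℝ)/(h:ℝ) * Real.log (1 + q*ε)) := by
        rw [hbeq, Real.rpow_def_of_pos (by linarith only [hqe])]
        congr 1
        ring
      rw [e1, e2, ← Real.exp_add, ha]
      apply Real.exp_le_exp.mpr
      exact chernoff_up_exp hε0 hε1 hq0 hq1 hDR hhR hL0 hM3h hε2
    exact le_trans step1 (le_trans step2 step3)
  -- lower tail
  have markov_lo : prBer E p (fun S =>
        ((Δ.filter (fun T => T ⊆ S)).card : ℝ) ≤ (1-ε)*(q*(D:ℝ)))
      ≤ Real.exp (-(3*L)) := by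
    have hy1 : (0:ℝ) < 1 - ε := by linarith
    set c := (1-ε) ^ ((1:ℝ)/(h:ℝ)) with hcdef
    have hc0 : 0 < c := Real.rpow_pos_of_pos hy1 _
    have hc1 : c ≤ 1 := Real.rpow_le_one hy1.le (by linarith) (by positivity)
    set b := (1-ε)*(q*(D:ℝ)) with hb
    have step1 : prBer E p (fun S =>
          ((Δ.filter (fun T => T ⊆ S)).card : ℝ) ≤ (1-ε)*(q*(D:ℝ)))
        ≤ c ^ (-b) * ∑ S ∈ E.powerset, p ^ S.card * (1-p) ^ (E.card - S.card) *
            c ^ ((Δ.filter (fun T => T ⊆ S)).card) := by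
      simp only [prBer]
      rw [Finset.mul_sum]
      refine Finset.sum_le_sum fun S hS => ?_
      by_cases hP : ((Δ.filter (fun T => T ⊆ S)).card : ℝ) ≤ (1-ε)*(q*(D:ℝ))
      · rw [if_pos hP]
        have h2 : (1:ℝ) ≤ c ^ ((((Δ.filter (fun T => T ⊆ S)).card : ℝ)) - b) :=
          Real.one_le_rpow_of_pos_of_le_one_of_nonpos hc0 hc1 (by rw [hb]; linarith only [hP])
        have hsplitc : c ^ ((((Δ.filter (fun T => T ⊆ S)).card : ℝ)) - b)
            = c ^ ((Δ.filter (fun T => T ⊆ S)).card) * c ^ (-b) := by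
          rw [sub_eq_add_neg, Real.rpow_add hc0, Real.rpow_natCast]
        have h5 := mul_le_mul_of_nonneg_left h2 (hwnn S)
        rw [mul_one, hsplitc] at h5
        calc p ^ S.card * (1-p) ^ (E.card - S.card)
            ≤ p ^ S.card * (1-p) ^ (E.card - S.card) *
              (c ^ ((Δ.filter (fun T => T ⊆ S)).card) * c ^ (-b)) := h5
          _ = c ^ (-b) * (p ^ S.card * (1-p) ^ (E.card - S.card) *
              c ^ ((Δ.filter (fun T => T ⊆ S)).card)) := by ring
      · rw [if_neg hP]
        exact mul_nonneg (Real.rpow_nonneg hc0.le _)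
          (mul_nonneg (hwnn S) (pow_nonneg hc0.le _))
    have step2 : c ^ (-b) * ∑ S ∈ E.powerset, p ^ S.card * (1-p) ^ (E.card - S.card) *
            c ^ ((Δ.filter (fun T => T ⊆ S)).card)
        ≤ c ^ (-b) * (1 - q + q*(1-ε)) ^ ((D:ℝ)/(h:ℝ)) :=
      mul_le_mul_of_nonneg_left (mgf (1-ε) hy1.le) (Real.rpow_nonneg hc0.le _)
    have h1q : (0:ℝ) ≤ ε * (1 - q) := mul_nonneg hε0.le (by linarith only [hq1])
    have step3 : c ^ (-b) * (1 - q + q*(1-ε)) ^ ((D:ℝ)/(h:ℝ)) ≤ Real.exp (-(3*L)) := by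
      have hbeq : 1 - q + q*(1-ε) = 1 - q*ε := by ring
      have hbase : (0:ℝ) < 1 - q*ε := by nlinarith [h1q, hε1]
      have e1 : c ^ (-b) = Real.exp (-b * ((1:ℝ)/(h:ℝ)) * Real.log (1-ε)) := by
        rw [hcdef, ← Real.rpow_mul hy1.le, Real.rpow_def_of_pos hy1]
        congr 1
        ring
      have e2 : (1 - q + q*(1-ε)) ^ ((D:ℝ)/(h:ℝ))
          = Real.exp ((D:ℝ)/(h:ℝ) * Real.log (1 - q*ε)) := by
        rw [hbeq, Real.rpow_def_of_pos hbase]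
        congr 1
        ring
      rw [e1, e2, ← Real.exp_add, hb]
      apply Real.exp_le_exp.mpr
      exact chernoff_lo_exp hε0 hε1 hq0 hq1 hDR hhR hL0 hM3h hε2
    exact le_trans step1 (le_trans step2 step3)
  -- union bound and complement
  have hunion : prBer E p (fun S => ¬ (|q⁻¹ * (((Δ.filter (fun T => T ⊆ S)).card : ℝ)) -
        (D:ℝ)| < ε * (D:ℝ)))
      ≤ prBer E p (fun S =>
          (1+ε)*(q*(D:ℝ)) ≤ ((Δ.filter (fun T => T ⊆ S)).card : ℝ))
        + prBer E p (fun S =>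
          ((Δ.filter (fun T => T ⊆ S)).card : ℝ) ≤ (1-ε)*(q*(D:ℝ))) := by
    simp only [prBer]
    rw [← Finset.sum_add_distrib]
    refine Finset.sum_le_sum fun S hS => ?_
    set X : ℝ := ((Δ.filter (fun T => T ⊆ S)).card : ℝ) with hX
    by_cases hbad : |q⁻¹ * X - (D:ℝ)| < ε * (D:ℝ)
    · rw [if_neg (not_not_intro hbad)]
      have h9a : (0:ℝ) ≤ (if (1+ε)*(q*(D:ℝ)) ≤ X then
          p ^ S.card * (1-p) ^ (E.card - S.card) else 0) := by
        split_ifs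
        · exact hwnn S
        · exact le_refl 0
      have h9b : (0:ℝ) ≤ (if X ≤ (1-ε)*(q*(D:ℝ)) then
          p ^ S.card * (1-p) ^ (E.card - S.card) else 0) := by
        split_ifs
        · exact hwnn S
        · exact le_refl 0
      linarith only [h9a, h9b]
    · rw [if_pos hbad]
      have habs : ε * (D:ℝ) ≤ |q⁻¹ * X - (D:ℝ)| := not_lt.mp hbad
      have hXq : q * (q⁻¹ * X) = X := mul_inv_cancel_left₀ (ne_of_gt hq0) X
      rcases le_abs.mp habs with hcase | hcase
      · have hup : (1+ε)*(q*(D:ℝ)) ≤ X := by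
          have h7 : (1+ε)*(D:ℝ) ≤ q⁻¹ * X := by linarith only [hcase]
          have h8 := mul_le_mul_of_nonneg_left h7 hq0.le
          rw [hXq] at h8
          linarith only [h8]
        rw [if_pos hup]
        have h9 : (0:ℝ) ≤ if X ≤ (1-ε)*(q*(D:ℝ)) then
            p ^ S.card * (1-p) ^ (E.card - S.card) else 0 := by
          split_ifs
          · exact hwnn S
          · exact le_refl 0
        linarith only [h9]
      · have hlo : X ≤ (1-ε)*(q*(D:ℝ)) := by
          have h7 : q⁻¹ * X ≤ (1-ε)*(D:ℝ) := by linarith only [hcase]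
          have h8 := mul_le_mul_of_nonneg_left h7 hq0.le
          rw [hXq] at h8
          linarith only [h8]
        rw [if_pos hlo]
        have h9 : (0:ℝ) ≤ if (1+ε)*(q*(D:ℝ)) ≤ X then
            p ^ S.card * (1-p) ^ (E.card - S.card) else 0 := by
          split_ifs
          · exact hwnn S
          · exact le_refl 0
        linarith only [h9]
  have hcompl : prBer E p (fun S => |q⁻¹ * (((Δ.filter (fun T => T ⊆ S)).card : ℝ)) -
        (D:ℝ)| < ε * (D:ℝ))
      = 1 - prBer E p (fun S => ¬ (|q⁻¹ * (((Δ.filter (fun T => T ⊆ S)).card : ℝ)) -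
        (D:ℝ)| < ε * (D:ℝ))) := by
    rw [eq_sub_iff_add_eq]
    simp only [prBer]
    rw [← Finset.sum_add_distrib]
    conv_rhs => rw [← wsum_one p E]
    refine Finset.sum_congr rfl fun S hS => ?_
    by_cases hP : |q⁻¹ * (((Δ.filter (fun T => T ⊆ S)).card : ℝ)) - (D:ℝ)| < ε * (D:ℝ)
    · rw [if_pos hP, if_neg (not_not_intro hP), add_zero]
    · rw [if_neg hP, if_pos hP, zero_add]
  -- numeric conclusion
  have hEL : Real.exp (-L) = δ/M := by
    rw [hL, Real.exp_neg, Real.exp_log hMδ, inv_div]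
  have hexp2 : Real.exp (-(2*L)) = (δ/M)^2 := by
    rw [show -(2*L) = -L + -L by ring, Real.exp_add, hEL]
    ring
  have hexp3 : Real.exp (-(3*L)) = (δ/M)^3 := by
    rw [show -(3*L) = -L + (-L + -L) by ring, Real.exp_add, Real.exp_add, hEL]
    ring
  have hδM : δ/M ≤ δ/4 := div_le_div_of_nonneg_left hδ0.le (by norm_num) hM4
  have hδM0 : (0:ℝ) ≤ δ/M := by positivity
  have hup' : Real.exp (-(2*L)) ≤ δ/16 := by
    rw [hexp2]
    calc (δ/M)^2 ≤ (δ/4)^2 := pow_le_pow_left₀ hδM0 hδM 2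
      _ ≤ δ/16 := by nlinarith
  have hlo' : Real.exp (-(3*L)) ≤ δ/64 := by
    rw [hexp3]
    calc (δ/M)^3 ≤ (δ/4)^3 := pow_le_pow_left₀ hδM0 hδM 3
      _ ≤ δ/64 := by
          have h2 : δ^2 ≤ 1 := by nlinarith
          have h3 : δ^3 ≤ δ := by nlinarith [h2, hδ0.le]
          linarith [h3]
  rw [hcompl]
  have hbound2 : prBer E p (fun S => ¬ (|q⁻¹ * (((Δ.filter (fun T => T ⊆ S)).card : ℝ)) -
      (D:ℝ)| < ε * (D:ℝ))) ≤ δ/16 + δ/64 :=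
    le_trans (le_trans hunion (add_le_add markov_up markov_lo)) (add_le_add hup' hlo')
  linarith only [hbound2, hδ0]
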